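/- For ρ > 0 define F(ρ) := √ρ · (∫₀¹ (1 − e^{−4ρ(u−u²)}) du / (4ρ)) / (∫₀¹ ((1/(8ρ))·(e^{4ρ(u−u²)} − 1) − (u−u²)/2)^{1/2} · e^{−4ρ(u−u²)} du). Then F(ρ) = 1 + (4/15)ρ + (2/45)ρ² + o(ρ²) as ρ → 0⁺, i.e. (F(ρ) − 1 − (4/15)ρ − (2/45)ρ²)/ρ² → 0 as ρ → 0⁺. -/

import Mathlib

set_option maxHeartbeats 1000000

open Real Filter Topology intervalIntegral
open Finset


lemma expA {t : ℝ} (h0 : 0 ≤ t) (h1 : t ≤ 1/4) :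
    |Real.exp (-(4*t)) - (1 - 4*t + 8*t^2)| ≤ 15 * t^3 := by
  have hx : |(-(4*t))| ≤ 1 := by rw [abs_neg, abs_of_nonneg (by linarith)]; linarith
  have h := Real.exp_bound hx (n := 3) (by norm_num)
  have hs : ∑ m ∈ range 3, (-(4*t)) ^ m / m.factorial = 1 - 4*t + 8*t^2 := by
    simp [Finset.sum_range_succ]; ring
  rw [hs, abs_neg, abs_of_nonneg (by linarith : (0:ℝ) ≤ 4*t)] at h
  norm_num [Nat.factorial] at h
  refine h.trans ?_
  nlinarith [pow_nonneg h0 3]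

lemma expB {t : ℝ} (h0 : 0 ≤ t) (h1 : t ≤ 1/4) :
    |Real.exp (-(4*t)) - (1 - 4*t + 8*t^2 - 32/3*t^3)| ≤ 14 * t^4 := by
  have hx : |(-(4*t))| ≤ 1 := by rw [abs_neg, abs_of_nonneg (by linarith)]; linarith
  have h := Real.exp_bound hx (n := 4) (by norm_num)
  have hs : ∑ m ∈ range 4, (-(4*t)) ^ m / m.factorial = 1 - 4*t + 8*t^2 - 32/3*t^3 := by
    simp [Finset.sum_range_succ, Nat.factorial]; ring
  rw [hs, abs_neg, abs_of_nonneg (by linarith : (0:ℝ) ≤ 4*t)] at h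
  norm_num [Nat.factorial] at h
  refine h.trans ?_
  nlinarith [pow_nonneg h0 4]

lemma expC {t : ℝ} (h0 : 0 ≤ t) (h1 : t ≤ 1/4) :
    |Real.exp (4*t) - (1 + 4*t + 8*t^2 + 32/3*t^3 + 32/3*t^4)| ≤ 11 * t^5 := by
  have hx : |(4*t)| ≤ 1 := by rw [abs_of_nonneg (by linarith)]; linarith
  have h := Real.exp_bound hx (n := 5) (by norm_num)
  have hs : ∑ m ∈ range 5, (4*t) ^ m / m.factorial = 1 + 4*t + 8*t^2 + 32/3*t^3 + 32/3*t^4 := by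
    simp [Finset.sum_range_succ, Nat.factorial]; ring
  rw [hs, abs_of_nonneg (by linarith : (0:ℝ) ≤ 4*t)] at h
  norm_num [Nat.factorial] at h
  refine h.trans ?_
  nlinarith [pow_nonneg h0 5]


lemma sqrtg {ρ q : ℝ} (hρ : 0 < ρ) (hρ1 : ρ ≤ 1) (hq0 : 0 ≤ q) (hq : q ≤ 1/4) :
    |Real.sqrt ((Real.exp (4*(ρ*q)) - 1 - 4*(ρ*q))/(8*ρ)) -
      Real.sqrt ρ * (q * (1 + 2/3*(ρ*q) + 4/9*(ρ*q)^2))| ≤ Real.sqrt ρ * (q * (3*(ρ*q)^3)) := by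
  rcases eq_or_lt_of_le hq0 with h | hq0'
  · simp [← h]
  set t := ρ * q with ht
  have ht0 : 0 ≤ t := by positivity
  have ht1 : t ≤ 1/4 := by nlinarith
  have hgnum : (0:ℝ) ≤ Real.exp (4*t) - 1 - 4*t := by
    have := Real.add_one_le_exp (4*t); linarith
  have hg0 : (0:ℝ) ≤ (Real.exp (4*t) - 1 - 4*t)/(8*ρ) := by positivity
  set g := (Real.exp (4*t) - 1 - 4*t)/(8*ρ) with hgdef
  set y := Real.sqrt ρ * (q * (1 + 2/3*t + 4/9*t^2)) with hy
  have hsr : (0:ℝ) < Real.sqrt ρ := Real.sqrt_pos.2 hρ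
  have hy0 : 0 ≤ y := by positivity
  have hylb : Real.sqrt ρ * q ≤ y := by nlinarith
  have hsq : Real.sqrt g ^ 2 = g := Real.sq_sqrt hg0
  have hysq : y^2 = ρ * (q * (1 + 2/3*t + 4/9*t^2))^2 := by
    rw [hy, mul_pow, Real.sq_sqrt hρ.le]
  -- bound |g - y^2|
  have hbound : |g - y^2| ≤ 17/8 * ρ^4 * q^5 := by
    have hE := expC ht0 ht1
    have hid : g - y^2 = ((Real.exp (4*t) - (1 + 4*t + 8*t^2 + 32/3*t^3 + 32/3*t^4))
        - (128/27*t^5 + 128/81*t^6)) / (8*ρ) := by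
      rw [hysq, hgdef]; field_simp; ring
    rw [hid, abs_div, abs_of_pos (by positivity : (0:ℝ) < 8*ρ), div_le_iff₀ (by positivity)]
    have h2 : |(Real.exp (4*t) - (1 + 4*t + 8*t^2 + 32/3*t^3 + 32/3*t^4))
        - (128/27*t^5 + 128/81*t^6)| ≤ 11*t^5 + (128/27*t^5 + 128/81*t^6) := by
      refine (abs_sub ..).trans ?_
      have : |128/27*t^5 + 128/81*t^6| = 128/27*t^5 + 128/81*t^6 :=
        abs_of_nonneg (by positivity)
      rw [this]; linarith
    refine h2.trans ?_
    have h6 : t^6 ≤ 1/4 * t^5 := by nlinarith [pow_nonneg ht0 5]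
    have h5 : t^5 = ρ^5 * q^5 := by rw [ht]; ring
    nlinarith [pow_nonneg hq0 5, pow_pos hρ 5, pow_le_pow_left₀ hρ.le hρ1 5,
      mul_pos (pow_pos hρ 5) (pow_pos hq0' 5)]
  -- convert
  have hkey : |Real.sqrt g - y| * (Real.sqrt ρ * q) ≤ |g - y^2| := by
    have hfac : |g - y^2| = |Real.sqrt g - y| * (Real.sqrt g + y) := by
      rw [← abs_of_nonneg (by positivity : (0:ℝ) ≤ Real.sqrt g + y), ← abs_mul]
      have hr : (Real.sqrt g - y) * (Real.sqrt g + y) = Real.sqrt g ^ 2 - y^2 := by ring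
      rw [hr, hsq]
    rw [hfac]
    have : Real.sqrt ρ * q ≤ Real.sqrt g + y := le_add_of_nonneg_of_le (Real.sqrt_nonneg _) hylb
    exact mul_le_mul_of_nonneg_left this (abs_nonneg _)
  have hrq : (0:ℝ) < Real.sqrt ρ * q := by positivity
  rw [← mul_le_mul_iff_of_pos_right hrq]
  calc |Real.sqrt g - y| * (Real.sqrt ρ * q) ≤ |g - y^2| := hkey
    _ ≤ 17/8 * ρ^4 * q^5 := hbound
    _ ≤ Real.sqrt ρ * (q * (3*t^3)) * (Real.sqrt ρ * q) := by
        have hss : Real.sqrt ρ * Real.sqrt ρ = ρ := Real.mul_self_sqrt hρ.le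
        have hrhs : Real.sqrt ρ * (q*(3*t^3)) * (Real.sqrt ρ * q)
            = (Real.sqrt ρ * Real.sqrt ρ) * (3*ρ^3*q^5) := by rw [ht]; ring
        rw [hrhs, hss]
        nlinarith [mul_pos (pow_pos hρ 4) (pow_pos hq0' 5)]


lemma Npoint {ρ q : ℝ} (hρ : 0 < ρ) (hρ1 : ρ ≤ 1) (hq0 : 0 ≤ q) (hq : q ≤ 1/4) :
    |(1 - Real.exp (-(4*ρ)*q))/(4*ρ) - (q - 2*ρ*q^2 + 8/3*ρ^2*q^3)| ≤ 4*ρ^3 := by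
  set t := ρ * q with ht
  have ht0 : 0 ≤ t := by positivity
  have ht1 : t ≤ 1/4 := by nlinarith
  have h := expB ht0 ht1
  have he : (-(4*ρ))*q = -(4*t) := by rw [ht]; ring
  have hid : (1 - Real.exp (-(4*ρ)*q))/(4*ρ) - (q - 2*ρ*q^2 + 8/3*ρ^2*q^3)
      = -(Real.exp (-(4*t)) - (1 - 4*t + 8*t^2 - 32/3*t^3)) / (4*ρ) := by
    rw [he, ht]; field_simp; ring
  rw [hid, abs_div, abs_neg, abs_of_pos (by positivity : (0:ℝ) < 4*ρ),
    div_le_iff₀ (by positivity)]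
  refine h.trans ?_
  have ht4 : t^4 = ρ^4 * q^4 := by rw [ht]; ring
  have hq4 : q^4 ≤ 1 := by nlinarith [pow_nonneg hq0 2, pow_nonneg hq0 3]
  nlinarith [pow_pos hρ 3, pow_pos hρ 4, pow_nonneg hq0 4,
    mul_le_one₀ (le_refl (1:ℝ)) (pow_nonneg hq0 4) hq4,
    mul_le_mul_of_nonneg_left hq4 (pow_pos hρ 4).le, pow_le_pow_left₀ hρ.le hρ1 4]

lemma Dpoint {ρ q : ℝ} (hρ : 0 < ρ) (hρ1 : ρ ≤ 1) (hq0 : 0 ≤ q) (hq : q ≤ 1/4) :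
    |Real.sqrt (1/(8*ρ)*(Real.exp (4*ρ*q) - 1) - q/2) * Real.exp (-(4*ρ)*q)
      - Real.sqrt ρ * (q - 10/3*ρ*q^2 + 52/9*ρ^2*q^3)| ≤ Real.sqrt ρ * (26*ρ^3) := by
  set t := ρ * q with ht
  have ht0 : 0 ≤ t := by positivity
  have ht1 : t ≤ 1/4 := by nlinarith
  have hsr : (0:ℝ) < Real.sqrt ρ := Real.sqrt_pos.2 hρ
  have hinner : 1/(8*ρ)*(Real.exp (4*ρ*q) - 1) - q/2
      = (Real.exp (4*t) - 1 - 4*t)/(8*ρ) := by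
    rw [ht]; field_simp; ring
  have he : (-(4*ρ))*q = -(4*t) := by rw [ht]; ring
  rw [hinner, he]
  set E := Real.exp (-(4*t)) with hE
  have hE0 : 0 < E := Real.exp_pos _
  have hE1 : E ≤ 1 := Real.exp_le_one_iff.2 (by linarith)
  set s := 1 + 2/3*t + 4/9*t^2 with hs
  have hs1 : 1 ≤ s := by rw [hs]; nlinarith [sq_nonneg t]
  have hsub : s ≤ 43/36 := by rw [hs]; nlinarith [sq_nonneg t, sq_nonneg (t - 1/4)]
  have h1 := sqrtg hρ hρ1 hq0 hq
  have h2 := expA ht0 ht1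
  have hg4t : (4:ℝ)*(ρ*q) = 4*t := by rw [ht]
  rw [hg4t] at h1
  -- triangle inequality chain
  have key : |Real.sqrt ((Real.exp (4*t) - 1 - 4*t)/(8*ρ)) * E
      - Real.sqrt ρ * (q - 10/3*ρ*q^2 + 52/9*ρ^2*q^3)| ≤ Real.sqrt ρ * (q * (26*t^3)) := by
    have e1 : |Real.sqrt ((Real.exp (4*t) - 1 - 4*t)/(8*ρ)) * E - Real.sqrt ρ * (q*s) * E|
        ≤ Real.sqrt ρ * (q * (3*t^3)) := by
      rw [← sub_mul, abs_mul, abs_of_pos hE0]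
      calc |Real.sqrt ((Real.exp (4*t) - 1 - 4*t)/(8*ρ)) - Real.sqrt ρ * (q*s)| * E
          ≤ (Real.sqrt ρ * (q * (3*t^3))) * 1 := by
            apply mul_le_mul _ hE1 hE0.le (by positivity)
            convert h1 using 3
        _ = Real.sqrt ρ * (q * (3*t^3)) := by ring
    have e2 : |Real.sqrt ρ * (q*s) * E - Real.sqrt ρ * (q*s) * (1 - 4*t + 8*t^2)|
        ≤ Real.sqrt ρ * (q * (18*t^3)) := by
      rw [← mul_sub, abs_mul]
      have h3 : |Real.sqrt ρ * (q*s)| = Real.sqrt ρ * (q*s) := abs_of_nonneg (by positivity)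
      rw [h3]
      calc Real.sqrt ρ * (q*s) * |E - (1 - 4*t + 8*t^2)|
          ≤ Real.sqrt ρ * (q*(43/36)) * (15*t^3) := by
            apply mul_le_mul _ h2 (abs_nonneg _) (by positivity)
            exact mul_le_mul_of_nonneg_left (mul_le_mul_of_nonneg_left hsub hq0) hsr.le
        _ ≤ Real.sqrt ρ * (q * (18*t^3)) := by
            have e2b : Real.sqrt ρ * (q*(43/36)) * (15*t^3)
                = (43*15/36) * (Real.sqrt ρ * (q*t^3)) := by ring
            have e2c : Real.sqrt ρ * (q * (18*t^3)) = 18 * (Real.sqrt ρ * (q*t^3)) := by ring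
            rw [e2b, e2c]
            exact mul_le_mul_of_nonneg_right (by norm_num) (by positivity)
    have e3 : |Real.sqrt ρ * (q*s) * (1 - 4*t + 8*t^2)
        - Real.sqrt ρ * (q - 10/3*ρ*q^2 + 52/9*ρ^2*q^3)| ≤ Real.sqrt ρ * (q * (5*t^3)) := by
      have hid : Real.sqrt ρ * (q*s) * (1 - 4*t + 8*t^2)
          - Real.sqrt ρ * (q - 10/3*ρ*q^2 + 52/9*ρ^2*q^3)
          = Real.sqrt ρ * (q * (32/9*t^3 + 32/9*t^4)) := by
        rw [hs, ht]; ring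
      rw [hid, abs_of_nonneg (by positivity)]
      have h5 : 32/9*t^3 + 32/9*t^4 ≤ 5*t^3 := by nlinarith [pow_nonneg ht0 3]
      exact mul_le_mul_of_nonneg_left (mul_le_mul_of_nonneg_left h5 hq0) hsr.le
    calc |Real.sqrt ((Real.exp (4*t) - 1 - 4*t)/(8*ρ)) * E
        - Real.sqrt ρ * (q - 10/3*ρ*q^2 + 52/9*ρ^2*q^3)|
        ≤ |Real.sqrt ((Real.exp (4*t) - 1 - 4*t)/(8*ρ)) * E - Real.sqrt ρ * (q*s) * E|
          + |Real.sqrt ρ * (q*s) * E - Real.sqrt ρ * (q*s) * (1 - 4*t + 8*t^2)|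
          + |Real.sqrt ρ * (q*s) * (1 - 4*t + 8*t^2)
            - Real.sqrt ρ * (q - 10/3*ρ*q^2 + 52/9*ρ^2*q^3)| := by
          have := abs_sub_le (Real.sqrt ((Real.exp (4*t) - 1 - 4*t)/(8*ρ)) * E)
            (Real.sqrt ρ * (q*s) * E) (Real.sqrt ρ * (q - 10/3*ρ*q^2 + 52/9*ρ^2*q^3))
          have := abs_sub_le (Real.sqrt ρ * (q*s) * E)
            (Real.sqrt ρ * (q*s) * (1 - 4*t + 8*t^2))
            (Real.sqrt ρ * (q - 10/3*ρ*q^2 + 52/9*ρ^2*q^3))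
          linarith
      _ ≤ Real.sqrt ρ * (q * (26*t^3)) := by linarith
  refine key.trans ?_
  have : q * (26*t^3) ≤ 26*ρ^3 := by
    have : q * t^3 = ρ^3 * q^4 := by rw [ht]; ring
    have hq4 : q^4 ≤ 1 := by nlinarith [pow_nonneg hq0 2, pow_nonneg hq0 3]
    nlinarith [pow_pos hρ 3]
  nlinarith

lemma intpoly (a b c : ℝ) :
    ∫ u in (0:ℝ)..1, (a*(u - u^2) + b*(u-u^2)^2 + c*(u-u^2)^3) = a/6 + b/30 + c/140 := by
  have h : ∀ u : ℝ, a*(u - u^2) + b*(u-u^2)^2 + c*(u-u^2)^3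
      = a*u + ((b-a)*u^2 + ((c-2*b)*u^3 + ((b-3*c)*u^4 + (3*c*u^5 + (-c)*u^6)))) := by
    intro u; ring
  simp_rw [h]
  have I : ∀ (d : ℝ) (n : ℕ), IntervalIntegrable (fun u:ℝ => d*u^n) MeasureTheory.volume 0 1 :=
    fun d n => (continuous_const.mul (continuous_pow n)).intervalIntegrable _ _
  have I1 : IntervalIntegrable (fun u:ℝ => a*u) MeasureTheory.volume 0 1 :=
    (continuous_const.mul continuous_id).intervalIntegrable _ _
  rw [integral_add I1 ((I _ 2).add ((I _ 3).add ((I _ 4).add ((I _ 5).add (I _ 6)))))]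
  rw [integral_add (I _ 2) ((I _ 3).add ((I _ 4).add ((I _ 5).add (I _ 6))))]
  rw [integral_add (I _ 3) ((I _ 4).add ((I _ 5).add (I _ 6)))]
  rw [integral_add (I _ 4) ((I _ 5).add (I _ 6))]
  rw [integral_add (I _ 5) (I _ 6)]
  have ha : ∫ x in (0:ℝ)..1, a*x = a/2 := by
    rw [intervalIntegral.integral_const_mul, integral_id]; ring
  simp [intervalIntegral.integral_const_mul, integral_pow, integral_id, mul_comm, ha]
  ring


lemma qmem {u : ℝ} (hu : u ∈ Set.uIoc (0:ℝ) 1) : 0 ≤ u - u^2 ∧ u - u^2 ≤ 1/4 := by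
  rw [Set.uIoc_of_le (by norm_num : (0:ℝ) ≤ 1)] at hu
  obtain ⟨h1, h2⟩ := hu
  constructor
  · nlinarith
  · nlinarith [sq_nonneg (u - 1/2)]

lemma Nint {ρ : ℝ} (hρ : 0 < ρ) (hρ1 : ρ ≤ 1) :
    |(∫ u in (0:ℝ)..1, (1 - Real.exp (-(4*ρ)*(u - u^2))))/(4*ρ)
      - (1/6 - ρ/15 + 2/105*ρ^2)| ≤ 4*ρ^3 := by
  have hfc : Continuous fun u:ℝ => (1 - Real.exp (-(4*ρ)*(u - u^2)))/(4*ρ) := by fun_prop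
  have hpc : Continuous fun u:ℝ =>
      (1*(u - u^2) + (-(2*ρ))*(u-u^2)^2 + (8/3*ρ^2)*(u-u^2)^3) := by fun_prop
  have hpint : ∫ u in (0:ℝ)..1,
      (1*(u - u^2) + (-(2*ρ))*(u-u^2)^2 + (8/3*ρ^2)*(u-u^2)^3)
      = 1/6 - ρ/15 + 2/105*ρ^2 := by
    rw [intpoly]; ring
  have hdiv : (∫ u in (0:ℝ)..1, (1 - Real.exp (-(4*ρ)*(u - u^2))))/(4*ρ)
      = ∫ u in (0:ℝ)..1, (1 - Real.exp (-(4*ρ)*(u - u^2)))/(4*ρ) :=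
    (intervalIntegral.integral_div _ _).symm
  rw [hdiv, ← hpint, ← intervalIntegral.integral_sub (hfc.intervalIntegrable 0 1)
    (hpc.intervalIntegrable 0 1)]
  have hb := intervalIntegral.norm_integral_le_of_norm_le_const (C := 4*ρ^3)
    (f := fun u:ℝ => (1 - Real.exp (-(4*ρ)*(u - u^2)))/(4*ρ)
      - (1*(u - u^2) + (-(2*ρ))*(u-u^2)^2 + (8/3*ρ^2)*(u-u^2)^3))
    (a := 0) (b := 1) ?_
  · simpa using hb
  · intro u hu
    obtain ⟨hq0, hq1⟩ := qmem hu
    have := Npoint hρ hρ1 hq0 hq1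
    rw [Real.norm_eq_abs]
    convert this using 2
    ring

lemma Dint {ρ : ℝ} (hρ : 0 < ρ) (hρ1 : ρ ≤ 1) :
    |(∫ u in (0:ℝ)..1, Real.sqrt (1/(8*ρ)*(Real.exp (4*ρ*(u-u^2)) - 1) - (u-u^2)/2)
        * Real.exp (-(4*ρ)*(u-u^2)))
      - Real.sqrt ρ * (1/6 - ρ/9 + 13/315*ρ^2)| ≤ Real.sqrt ρ * (26*ρ^3) := by
  have hfc : Continuous fun u:ℝ =>
      Real.sqrt (1/(8*ρ)*(Real.exp (4*ρ*(u-u^2)) - 1) - (u-u^2)/2)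
        * Real.exp (-(4*ρ)*(u-u^2)) := by fun_prop
  have hpc : Continuous fun u:ℝ => Real.sqrt ρ *
      (1*(u - u^2) + (-(10/3*ρ))*(u-u^2)^2 + (52/9*ρ^2)*(u-u^2)^3) := by fun_prop
  have hpint : ∫ u in (0:ℝ)..1, Real.sqrt ρ *
      (1*(u - u^2) + (-(10/3*ρ))*(u-u^2)^2 + (52/9*ρ^2)*(u-u^2)^3)
      = Real.sqrt ρ * (1/6 - ρ/9 + 13/315*ρ^2) := by
    rw [intervalIntegral.integral_const_mul, intpoly]; ring_nf
  rw [← hpint, ← intervalIntegral.integral_sub (hfc.intervalIntegrable 0 1)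
    (hpc.intervalIntegrable 0 1)]
  have hb := intervalIntegral.norm_integral_le_of_norm_le_const (C := Real.sqrt ρ * (26*ρ^3))
    (f := fun u:ℝ => Real.sqrt (1/(8*ρ)*(Real.exp (4*ρ*(u-u^2)) - 1) - (u-u^2)/2)
        * Real.exp (-(4*ρ)*(u-u^2))
      - Real.sqrt ρ * (1*(u - u^2) + (-(10/3*ρ))*(u-u^2)^2 + (52/9*ρ^2)*(u-u^2)^3))
    (a := 0) (b := 1) ?_
  · simpa using hb
  · intro u hu
    obtain ⟨hq0, hq1⟩ := qmem hu
    have := Dpoint hρ hρ1 hq0 hq1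
    rw [Real.norm_eq_abs]
    convert this using 2
    ring

noncomputable def Fspeed (ρ : ℝ) : ℝ :=
  Real.sqrt ρ *
    ((∫ u in (0:ℝ)..1, (1 - Real.exp (-(4 * ρ) * (u - u ^ 2)))) / (4 * ρ)) /
    (∫ u in (0:ℝ)..1,
      Real.sqrt (1 / (8 * ρ) * (Real.exp (4 * ρ * (u - u ^ 2)) - 1) - (u - u ^ 2) / 2) *
        Real.exp (-(4 * ρ) * (u - u ^ 2)))

theorem speed_expansion :
    Tendsto (fun ρ : ℝ => (Fspeed ρ - 1 - 4 / 15 * ρ - 2 / 45 * ρ ^ 2) / ρ ^ 2)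
      (𝓝[>] 0) (𝓝 0) := by
  have hg : Tendsto (fun ρ : ℝ => 256*ρ) (𝓝[>] (0:ℝ)) (𝓝 0) := by
    have : Tendsto (fun ρ:ℝ => 256*ρ) (𝓝 0) (𝓝 (256*0)) :=
      (continuous_const.mul continuous_id).tendsto 0
    simpa using this.mono_left nhdsWithin_le_nhds
  refine squeeze_zero_norm' ?_ hg
  have hmem : Set.Ioo (0:ℝ) (1/10) ∈ 𝓝[>] (0:ℝ) :=
    Ioo_mem_nhdsGT_of_mem ⟨le_refl _, by norm_num⟩
  filter_upwards [hmem] with ρ hρm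
  obtain ⟨hρ, hρ'⟩ := hρm
  have hρ1 : ρ ≤ 1 := by linarith
  have hsr : (0:ℝ) < Real.sqrt ρ := Real.sqrt_pos.2 hρ
  set A : ℝ := 1/6 - ρ/15 + 2/105*ρ^2 with hA
  set B : ℝ := 1/6 - ρ/9 + 13/315*ρ^2 with hB
  set P : ℝ := 1 + 4/15*ρ + 2/45*ρ^2 with hP
  set N : ℝ := (∫ u in (0:ℝ)..1, (1 - Real.exp (-(4*ρ)*(u - u^2))))/(4*ρ) with hN
  set D : ℝ := ∫ u in (0:ℝ)..1, Real.sqrt (1/(8*ρ)*(Real.exp (4*ρ*(u-u^2)) - 1) - (u-u^2)/2)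
        * Real.exp (-(4*ρ)*(u-u^2)) with hD
  have hNb : |N - A| ≤ 4*ρ^3 := Nint hρ hρ1
  have hDb : |D - Real.sqrt ρ * B| ≤ Real.sqrt ρ * (26*ρ^3) := Dint hρ hρ1
  have hρ3 : ρ^3 ≤ 1/1000 := by nlinarith
  set Dt : ℝ := D / Real.sqrt ρ with hDt
  have hDD : D = Real.sqrt ρ * Dt := by
    rw [hDt, mul_div_cancel₀ _ (ne_of_gt hsr)]
  have hDtb : |Dt - B| ≤ 26*ρ^3 := by
    have h1 : Real.sqrt ρ * (Dt - B) = D - Real.sqrt ρ * B := by rw [hDD]; ring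
    have h2 : |Real.sqrt ρ * (Dt - B)| = Real.sqrt ρ * |Dt - B| := by
      rw [abs_mul, abs_of_pos hsr]
    refine le_of_mul_le_mul_left ?_ hsr
    rw [← h2, h1]
    exact hDb
  -- Fspeed = N / Dt
  have hFs : Fspeed ρ = N / Dt := by
    show Real.sqrt ρ * N / D = N / Dt
    rw [hDD, show Real.sqrt ρ * N / (Real.sqrt ρ * Dt) = N / Dt from
      mul_div_mul_left _ _ (ne_of_gt hsr)]
  clear_value A B P N D Dt
  have hBlb : (7:ℝ)/45 ≤ B := by rw [hB]; nlinarith [sq_nonneg ρ]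
  have hDtlb : (1:ℝ)/8 ≤ Dt := by
    have := (abs_le.1 hDtb).1
    nlinarith
  have hDtpos : 0 < Dt := by linarith
  -- numerator bound
  have hAPB : |A - P*B| ≤ ρ^3 := by
    have hid : A - P*B = -(86/14175)*ρ^3 - 26/14175*ρ^4 := by rw [hA, hP, hB]; ring
    rw [hid, abs_le]
    constructor <;> nlinarith [pow_nonneg hρ.le 3, pow_nonneg hρ.le 4]
  have hPpos : (0:ℝ) < P := by rw [hP]; nlinarith
  have hPub : P ≤ 1.03 := by rw [hP]; nlinarith
  have hnum : |N - P*Dt| ≤ 32*ρ^3 := by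
    have hid : N - P*Dt = (N - A) - P*(Dt - B) + (A - P*B) := by ring
    have h3 : |P*(Dt-B)| ≤ 1.03*(26*ρ^3) := by
      rw [abs_mul, abs_of_pos hPpos]
      exact mul_le_mul hPub hDtb (abs_nonneg _) (by norm_num)
    calc |N - P*Dt| = |(N - A) - P*(Dt - B) + (A - P*B)| := by rw [hid]
      _ ≤ |N - A| + |P*(Dt-B)| + |A - P*B| := by
          have := abs_add_le ((N - A) - P*(Dt - B)) (A - P*B)
          have := abs_sub (N - A) (P*(Dt - B))
          linarith
      _ ≤ 4*ρ^3 + 1.03*(26*ρ^3) + ρ^3 := by linarith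
      _ ≤ 32*ρ^3 := by nlinarith [pow_nonneg hρ.le 3]
  have hdiff : |Fspeed ρ - 1 - 4/15*ρ - 2/45*ρ^2| ≤ 256*ρ^3 := by
    have hid2 : Fspeed ρ - 1 - 4/15*ρ - 2/45*ρ^2 = (N - P*Dt)/Dt := by
      rw [hFs, hP]; field_simp; ring
    rw [hid2, abs_div, abs_of_pos hDtpos, div_le_iff₀ hDtpos]
    nlinarith [abs_nonneg (N - P*Dt), pow_nonneg hρ.le 3]
  rw [Real.norm_eq_abs, abs_div, abs_of_pos (pow_pos hρ 2), div_le_iff₀ (pow_pos hρ 2)]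
  calc |Fspeed ρ - 1 - 4 / 15 * ρ - 2 / 45 * ρ ^ 2| ≤ 256*ρ^3 := hdiff
    _ = 256*ρ*ρ^2 := by ring
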